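/- arXiv:2101.00300 — 2 statements merged into one kernel-verified Lean document; each statement's English description precedes it below -/
import Mathlib

section
/- (Simulation Lemma, Lemma 1.) Let M1 = (T1, R1) and M2 = (T2, R2) be two stochastic finite MDPs on the same nonempty finite state space S and nonempty finite action space A, let H ≥ 1 be a horizon, and let π : S → PMF(A) be any stochastic stationary policy, with h-step values V1 and V2 in M1 and M2 respectively. Assume: (i) |R1(s,a) − R2(s,a)| ≤ δR for all (s,a) ∈ S × A; (ii) Σ_{s'∈S} |T1(s,a)(s') − T2(s,a)(s')| ≤ δT for all (s,a) ∈ S × A; (iii) R1(s,a) ≥ 0 and R2(s,a) ≥ 0 for all (s,a), and for every sequence of state-action pairs (s_0,a_0), …, (s_{H−1},a_{H−1}) and each j ∈ {1,2} we have Σ_{t<H} R_j(s_t,a_t) ≤ 1. Then for every state s0, |V1(H,s0) − V2(H,s0)| ≤ δR·H + δT·H. -/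
open scoped BigOperators

/-- The `h`-step value of a stochastic stationary policy `π` in the stochastic finite MDP
with transition kernel `T` and reward function `R`:
`V 0 s = 0`, `V (h+1) s = Σ_a π(s)(a) · (R(s,a) + Σ_{s'} T(s,a)(s') · V h s')`. -/
noncomputable def stochVal {S A : Type*} [Fintype S] [Fintype A]
    (T : S → A → PMF S) (R : S → A → ℝ) (π : S → PMF A) : ℕ → S → ℝ
  | 0, _ => 0
  | h + 1, s =>
      ∑ a : A, ((π s) a).toReal *
        (R s a + ∑ s' : S, ((T s a) s').toReal * stochVal T R π h s')

lemma sum_pmf_toReal {α : Type*} [Fintype α] (p : PMF α) :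
    ∑ a : α, (p a).toReal = 1 := by
  rw [← ENNReal.toReal_sum (fun a _ => PMF.apply_ne_top p a), ← tsum_fintype (L := .unconditional _),
    PMF.tsum_coe, ENNReal.toReal_one]

lemma stochVal_nonneg {S A : Type*} [Fintype S] [Fintype A]
    (T : S → A → PMF S) (R : S → A → ℝ) (π : S → PMF A)
    (hR : ∀ s a, 0 ≤ R s a) (h : ℕ) (s : S) : 0 ≤ stochVal T R π h s := by
  induction h generalizing s with
  | zero => simp [stochVal]
  | succ h ih =>
    simp only [stochVal]
    refine Finset.sum_nonneg fun a _ => mul_nonneg ENNReal.toReal_nonneg ?_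
    refine add_nonneg (hR s a) (Finset.sum_nonneg fun s' _ =>
      mul_nonneg ENNReal.toReal_nonneg (ih s'))

lemma stochVal_le {S A : Type*} [Fintype S] [Fintype A]
    (T : S → A → PMF S) (R : S → A → ℝ) (π : S → PMF A)
    (c : ℝ) (hc : 0 ≤ c) (hR : ∀ s a, R s a ≤ c) (h : ℕ) (s : S) :
    stochVal T R π h s ≤ h * c := by
  induction h generalizing s with
  | zero => simp [stochVal]
  | succ h ih =>
    simp only [stochVal]
    have key : ∀ a : A, ((π s) a).toReal *
        (R s a + ∑ s' : S, ((T s a) s').toReal * stochVal T R π h s')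
        ≤ ((π s) a).toReal * (c + h * c) := by
      intro a
      refine mul_le_mul_of_nonneg_left ?_ ENNReal.toReal_nonneg
      refine add_le_add (hR s a) ?_
      calc ∑ s' : S, ((T s a) s').toReal * stochVal T R π h s'
          ≤ ∑ s' : S, ((T s a) s').toReal * (h * c) :=
            Finset.sum_le_sum fun s' _ =>
              mul_le_mul_of_nonneg_left (ih s') ENNReal.toReal_nonneg
        _ = h * c := by rw [← Finset.sum_mul, sum_pmf_toReal, one_mul]
    calc (∑ a : A, ((π s) a).toReal *
          (R s a + ∑ s' : S, ((T s a) s').toReal * stochVal T R π h s'))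
        ≤ ∑ a : A, ((π s) a).toReal * (c + h * c) :=
          Finset.sum_le_sum fun a _ => key a
      _ = (h + 1 : ℕ) * c := by
          rw [← Finset.sum_mul, sum_pmf_toReal, one_mul]; push_cast; ring

/-- **Simulation Lemma (Lemma 1).** -/
theorem simulation_lemma
    {S A : Type*} [Fintype S] [Nonempty S] [Fintype A] [Nonempty A]
    (T1 T2 : S → A → PMF S) (R1 R2 : S → A → ℝ)
    (H : ℕ) (hH : 1 ≤ H)
    (π : S → PMF A)
    (δR δT : ℝ) (hδR : 0 ≤ δR) (hδT : 0 ≤ δT)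
    (hrew : ∀ s : S, ∀ a : A, |R1 s a - R2 s a| ≤ δR)
    (htrans : ∀ s : S, ∀ a : A,
      (∑ s' : S, |((T1 s a) s').toReal - ((T2 s a) s').toReal|) ≤ δT)
    (hnonneg1 : ∀ s : S, ∀ a : A, 0 ≤ R1 s a)
    (hnonneg2 : ∀ s : S, ∀ a : A, 0 ≤ R2 s a)
    (hbdd1 : ∀ sa : Fin H → S × A, (∑ t : Fin H, R1 (sa t).1 (sa t).2) ≤ 1)
    (hbdd2 : ∀ sa : Fin H → S × A, (∑ t : Fin H, R2 (sa t).1 (sa t).2) ≤ 1)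
    (s0 : S) :
    |stochVal T1 R1 π H s0 - stochVal T2 R2 π H s0| ≤ δR * H + δT * H := by
  have hHpos : (0:ℝ) < H := by exact_mod_cast hH
  -- each reward is at most 1/H
  have hR2le : ∀ s a, R2 s a ≤ 1 / H := by
    intro s a
    have := hbdd2 (fun _ => (s, a))
    simp [Finset.sum_const, Finset.card_univ] at this
    rw [le_div_iff₀ hHpos]
    linarith [this]
  -- V2 is bounded by 1 for horizons ≤ H
  have hV2bd : ∀ h : ℕ, h ≤ H → ∀ s, |stochVal T2 R2 π h s| ≤ 1 := by
    intro h hhH s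
    rw [abs_le]
    constructor
    · linarith [stochVal_nonneg T2 R2 π hnonneg2 h s]
    · calc stochVal T2 R2 π h s ≤ h * (1 / H) :=
            stochVal_le T2 R2 π (1/H) (by positivity) hR2le h s
        _ ≤ H * (1 / H) := by
            apply mul_le_mul_of_nonneg_right _ (by positivity)
            exact_mod_cast hhH
        _ = 1 := by field_simp
  -- main induction
  have main : ∀ h : ℕ, h ≤ H → ∀ s,
      |stochVal T1 R1 π h s - stochVal T2 R2 π h s| ≤ (δR + δT) * h := by
    intro h
    induction h with
    | zero => intro _ s; simp [stochVal]
    | succ h ih =>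
      intro hhH s
      have ih' := ih (Nat.le_of_succ_le hhH)
      simp only [stochVal]
      rw [← Finset.sum_sub_distrib]
      have key : ∀ a : A,
          |((π s) a).toReal *
              (R1 s a + ∑ s' : S, ((T1 s a) s').toReal * stochVal T1 R1 π h s')
            - ((π s) a).toReal *
              (R2 s a + ∑ s' : S, ((T2 s a) s').toReal * stochVal T2 R2 π h s')|
          ≤ ((π s) a).toReal * ((δR + δT) * (h + 1)) := by
        intro a
        rw [← mul_sub, abs_mul, abs_of_nonneg (ENNReal.toReal_nonneg)]
        refine mul_le_mul_of_nonneg_left ?_ ENNReal.toReal_nonneg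
        have hsplit :
            (R1 s a + ∑ s' : S, ((T1 s a) s').toReal * stochVal T1 R1 π h s')
            - (R2 s a + ∑ s' : S, ((T2 s a) s').toReal * stochVal T2 R2 π h s')
            = (R1 s a - R2 s a)
              + (∑ s' : S, ((T1 s a) s').toReal *
                  (stochVal T1 R1 π h s' - stochVal T2 R2 π h s'))
              + (∑ s' : S, (((T1 s a) s').toReal - ((T2 s a) s').toReal) *
                  stochVal T2 R2 π h s') := by
          have e1 : (∑ s' : S, ((T1 s a) s').toReal *
                  (stochVal T1 R1 π h s' - stochVal T2 R2 π h s'))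
              + (∑ s' : S, (((T1 s a) s').toReal - ((T2 s a) s').toReal) *
                  stochVal T2 R2 π h s')
              = (∑ s' : S, ((T1 s a) s').toReal * stochVal T1 R1 π h s')
              - ∑ s' : S, ((T2 s a) s').toReal * stochVal T2 R2 π h s' := by
            rw [← Finset.sum_add_distrib, ← Finset.sum_sub_distrib]
            exact Finset.sum_congr rfl fun s' _ => by ring
          rw [add_assoc, e1]
          ring
        rw [hsplit]
        have h1 : |R1 s a - R2 s a| ≤ δR := hrew s a
        have h2 : |∑ s' : S, ((T1 s a) s').toReal *
            (stochVal T1 R1 π h s' - stochVal T2 R2 π h s')| ≤ (δR + δT) * h := by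
          calc |∑ s' : S, ((T1 s a) s').toReal *
              (stochVal T1 R1 π h s' - stochVal T2 R2 π h s')|
              ≤ ∑ s' : S, |((T1 s a) s').toReal *
                (stochVal T1 R1 π h s' - stochVal T2 R2 π h s')| :=
                Finset.abs_sum_le_sum_abs _ _
            _ ≤ ∑ s' : S, ((T1 s a) s').toReal * ((δR + δT) * h) := by
                refine Finset.sum_le_sum fun s' _ => ?_
                rw [abs_mul, abs_of_nonneg ENNReal.toReal_nonneg]
                exact mul_le_mul_of_nonneg_left (ih' s') ENNReal.toReal_nonneg
            _ = (δR + δT) * h := by rw [← Finset.sum_mul, sum_pmf_toReal, one_mul]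
        have h3 : |∑ s' : S, (((T1 s a) s').toReal - ((T2 s a) s').toReal) *
            stochVal T2 R2 π h s'| ≤ δT := by
          calc |∑ s' : S, (((T1 s a) s').toReal - ((T2 s a) s').toReal) *
              stochVal T2 R2 π h s'|
              ≤ ∑ s' : S, |(((T1 s a) s').toReal - ((T2 s a) s').toReal) *
                stochVal T2 R2 π h s'| := Finset.abs_sum_le_sum_abs _ _
            _ ≤ ∑ s' : S, |((T1 s a) s').toReal - ((T2 s a) s').toReal| * 1 := by
                refine Finset.sum_le_sum fun s' _ => ?_
                rw [abs_mul]
                exact mul_le_mul_of_nonneg_left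
                  (hV2bd h (Nat.le_of_succ_le hhH) s') (abs_nonneg _)
            _ ≤ δT := by simpa using htrans s a
        calc |(R1 s a - R2 s a)
              + (∑ s' : S, ((T1 s a) s').toReal *
                  (stochVal T1 R1 π h s' - stochVal T2 R2 π h s'))
              + (∑ s' : S, (((T1 s a) s').toReal - ((T2 s a) s').toReal) *
                  stochVal T2 R2 π h s')|
            ≤ |R1 s a - R2 s a|
              + |∑ s' : S, ((T1 s a) s').toReal *
                  (stochVal T1 R1 π h s' - stochVal T2 R2 π h s')|
              + |∑ s' : S, (((T1 s a) s').toReal - ((T2 s a) s').toReal) *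
                  stochVal T2 R2 π h s'| := abs_add_three _ _ _
          _ ≤ δR + (δR + δT) * h + δT := by linarith
          _ = (δR + δT) * (h + 1) := by ring
      calc |∑ a : A, (((π s) a).toReal *
            (R1 s a + ∑ s' : S, ((T1 s a) s').toReal * stochVal T1 R1 π h s')
          - ((π s) a).toReal *
            (R2 s a + ∑ s' : S, ((T2 s a) s').toReal * stochVal T2 R2 π h s'))|
          ≤ ∑ a : A, |((π s) a).toReal *
            (R1 s a + ∑ s' : S, ((T1 s a) s').toReal * stochVal T1 R1 π h s')
          - ((π s) a).toReal *
            (R2 s a + ∑ s' : S, ((T2 s a) s').toReal * stochVal T2 R2 π h s')| :=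
            Finset.abs_sum_le_sum_abs _ _
        _ ≤ ∑ a : A, ((π s) a).toReal * ((δR + δT) * (h + 1)) :=
            Finset.sum_le_sum fun a _ => key a
        _ = (δR + δT) * (h + 1 : ℕ) := by
            rw [← Finset.sum_mul, sum_pmf_toReal, one_mul]; push_cast; ring
  have := main H le_rfl s0
  linarith [this]
end

section
/- (Trajectory distribution bound, Eq. (D.1).) Let T1, T2 : S → A → PMF(S) be transition kernels on a nonempty finite state space S and nonempty finite action space A, let π : S → A be a deterministic stationary policy, let H ≥ 1, and fix an initial state s0 ∈ S. For j ∈ {1,2} define the probability of a state trajectory τ : Fin H → S by P_j(τ) = Π_{t=0}^{H−1} T_j(σ(t), π(σ(t)))(τ(t)), where σ(0) = s0 and σ(t) = τ(t−1) for t ≥ 1, with probabilities taken as real numbers. If Σ_{s'∈S} |T1(s,a)(s') − T2(s,a)(s')| ≤ δT for all (s,a) ∈ S × A, then Σ_{τ : Fin H → S} |P1(τ) − P2(τ)| ≤ δT·H. -/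
open scoped BigOperators

/-- The state preceding step `t` of the trajectory `τ` started at `s0`:
`σ 0 = s0` and `σ t = τ (t-1)` for `t ≥ 1`. -/
def prevState {S : Type*} (s0 : S) {H : ℕ} (τ : Fin H → S) (t : Fin H) : S :=
  if h : (t : ℕ) = 0 then s0
  else τ ⟨(t : ℕ) - 1, lt_of_le_of_lt (Nat.sub_le _ _) t.isLt⟩

/-- The probability of the state trajectory `τ : Fin H → S` under transition kernel `T`,
deterministic stationary policy `π`, and initial state `s0`:
`P(τ) = Π_{t=0}^{H-1} T(σ(t), π(σ(t)))(τ(t))` with `σ(0) = s0`, `σ(t) = τ(t-1)` for `t ≥ 1`. -/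
noncomputable def trajProb {S A : Type*} (T : S → A → PMF S) (π : S → A)
    (s0 : S) (H : ℕ) (τ : Fin H → S) : ℝ :=
  ∏ t : Fin H, ((T (prevState s0 τ t) (π (prevState s0 τ t))) (τ t)).toReal

lemma cons_mk {S : Type*} (s1 : S) {H : ℕ} (τ : Fin H → S) (v : ℕ) (hv : v < H + 1) :
    Fin.cons (α := fun _ => S) s1 τ ⟨v, hv⟩ =
      if h : v = 0 then s1 else τ ⟨v - 1, by omega⟩ := by
  cases v with
  | zero => simp
  | succ k =>
    rw [dif_neg (Nat.succ_ne_zero k)]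
    have h1 : (⟨k + 1, hv⟩ : Fin (H + 1)) = (⟨k, by omega⟩ : Fin H).succ := rfl
    rw [h1, Fin.cons_succ]
    congr 1

lemma prevState_cons {S : Type*} (s0 s1 : S) {H : ℕ} (τ : Fin H → S) (t : Fin H) :
    prevState s0 (Fin.cons s1 τ) t.succ = prevState s1 τ t := by
  have hsucc : (t.succ : ℕ) = t.val + 1 := rfl
  unfold prevState
  rw [dif_neg (by omega), cons_mk]
  have h2 : (t.succ : ℕ) - 1 = (t : ℕ) := by omega
  simp only [h2]

lemma consEquiv_cons {S : Type*} {H : ℕ} (s1 : S) (τ : Fin H → S) :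
    (Fin.consEquiv (fun _ => S)) (s1, τ) = Fin.cons s1 τ := rfl

lemma trajProb_cons {S A : Type*} (T : S → A → PMF S) (π : S → A)
    (s0 s1 : S) (H : ℕ) (τ : Fin H → S) :
    trajProb T π s0 (H+1) (Fin.cons s1 τ) =
      ((T s0 (π s0)) s1).toReal * trajProb T π s1 H τ := by
  unfold trajProb
  rw [Fin.prod_univ_succ]
  have h0 : prevState s0 (Fin.cons s1 τ) 0 = s0 := by simp [prevState]
  rw [h0, Fin.cons_zero]
  congr 1
  refine Finset.prod_congr rfl fun t _ => ?_
  rw [prevState_cons, Fin.cons_succ]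

lemma pmf_sum_toReal {S : Type*} [Fintype S] (p : PMF S) :
    ∑ s : S, (p s).toReal = 1 := by
  have h := p.tsum_coe
  rw [tsum_fintype] at h
  have := ENNReal.toReal_sum (s := Finset.univ) (f := fun s : S => p s)
    (fun s _ => p.apply_ne_top s)
  rw [← this, h, ENNReal.toReal_one]

lemma trajProb_nonneg {S A : Type*} (T : S → A → PMF S) (π : S → A)
    (s0 : S) (H : ℕ) (τ : Fin H → S) : 0 ≤ trajProb T π s0 H τ :=
  Finset.prod_nonneg fun _ _ => ENNReal.toReal_nonneg

lemma trajProb_sum {S A : Type*} [Fintype S] (T : S → A → PMF S) (π : S → A)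
    (H : ℕ) (s0 : S) :
    ∑ τ : Fin H → S, trajProb T π s0 H τ = 1 := by
  induction H generalizing s0 with
  | zero => simp [trajProb]
  | succ H ih =>
    rw [← Equiv.sum_comp (Fin.consEquiv (fun _ => S))]
    rw [Fintype.sum_prod_type]
    have : ∀ s1 : S, ∑ τ : Fin H → S,
        trajProb T π s0 (H+1) ((Fin.consEquiv (fun _ => S)) (s1, τ)) =
        ((T s0 (π s0)) s1).toReal := by
      intro s1
      simp only [consEquiv_cons, trajProb_cons, ← Finset.mul_sum, ih, mul_one]
    simp only [this]
    exact pmf_sum_toReal _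

lemma traj_bound_aux {S A : Type*} [Fintype S]
    (T1 T2 : S → A → PMF S) (π : S → A)
    (δT : ℝ) (hδT : 0 ≤ δT)
    (htrans : ∀ s : S, ∀ a : A,
      (∑ s' : S, |((T1 s a) s').toReal - ((T2 s a) s').toReal|) ≤ δT)
    (H : ℕ) (s0 : S) :
    (∑ τ : Fin H → S, |trajProb T1 π s0 H τ - trajProb T2 π s0 H τ|) ≤ δT * H := by
  induction H generalizing s0 with
  | zero => simp [trajProb]
  | succ H ih =>
    rw [← Equiv.sum_comp (Fin.consEquiv (fun _ => S))]
    rw [Fintype.sum_prod_type]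
    simp only [consEquiv_cons, trajProb_cons]
    have key : ∀ s1 : S, ∀ τ : Fin H → S,
        |((T1 s0 (π s0)) s1).toReal * trajProb T1 π s1 H τ -
          ((T2 s0 (π s0)) s1).toReal * trajProb T2 π s1 H τ| ≤
        |((T1 s0 (π s0)) s1).toReal - ((T2 s0 (π s0)) s1).toReal| * trajProb T1 π s1 H τ +
          ((T2 s0 (π s0)) s1).toReal * |trajProb T1 π s1 H τ - trajProb T2 π s1 H τ| := by
      intro s1 τ
      have : ((T1 s0 (π s0)) s1).toReal * trajProb T1 π s1 H τ -
          ((T2 s0 (π s0)) s1).toReal * trajProb T2 π s1 H τ =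
          (((T1 s0 (π s0)) s1).toReal - ((T2 s0 (π s0)) s1).toReal) * trajProb T1 π s1 H τ +
          ((T2 s0 (π s0)) s1).toReal * (trajProb T1 π s1 H τ - trajProb T2 π s1 H τ) := by ring
      rw [this]
      refine (abs_add_le _ _).trans ?_
      rw [abs_mul, abs_mul, abs_of_nonneg (trajProb_nonneg _ _ _ _ _),
        abs_of_nonneg ENNReal.toReal_nonneg]
    calc ∑ s1 : S, ∑ τ : Fin H → S,
          |((T1 s0 (π s0)) s1).toReal * trajProb T1 π s1 H τ -
            ((T2 s0 (π s0)) s1).toReal * trajProb T2 π s1 H τ|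
        ≤ ∑ s1 : S, ∑ τ : Fin H → S,
          (|((T1 s0 (π s0)) s1).toReal - ((T2 s0 (π s0)) s1).toReal| * trajProb T1 π s1 H τ +
            ((T2 s0 (π s0)) s1).toReal * |trajProb T1 π s1 H τ - trajProb T2 π s1 H τ|) := by
          exact Finset.sum_le_sum fun s1 _ => Finset.sum_le_sum fun τ _ => key s1 τ
      _ = ∑ s1 : S, (|((T1 s0 (π s0)) s1).toReal - ((T2 s0 (π s0)) s1).toReal| * 1 +
            ((T2 s0 (π s0)) s1).toReal *
              ∑ τ : Fin H → S, |trajProb T1 π s1 H τ - trajProb T2 π s1 H τ|) := by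
          refine Finset.sum_congr rfl fun s1 _ => ?_
          rw [Finset.sum_add_distrib, ← Finset.mul_sum, ← Finset.mul_sum, trajProb_sum]
      _ ≤ ∑ s1 : S, (|((T1 s0 (π s0)) s1).toReal - ((T2 s0 (π s0)) s1).toReal| +
            ((T2 s0 (π s0)) s1).toReal * (δT * H)) := by
          refine Finset.sum_le_sum fun s1 _ => ?_
          rw [mul_one]
          exact add_le_add_right (mul_le_mul_of_nonneg_left (ih s1) ENNReal.toReal_nonneg) _
      _ = (∑ s1 : S, |((T1 s0 (π s0)) s1).toReal - ((T2 s0 (π s0)) s1).toReal|) +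
            (∑ s1 : S, ((T2 s0 (π s0)) s1).toReal) * (δT * H) := by
          rw [Finset.sum_add_distrib, ← Finset.sum_mul]
      _ ≤ δT + 1 * (δT * H) := by
          rw [pmf_sum_toReal]
          exact add_le_add_left (htrans s0 (π s0)) _
      _ = δT * (H + 1 : ℕ) := by push_cast; ring

/-- **Trajectory distribution bound (Eq. (D.1)).** -/
theorem trajectory_distribution_bound
    {S A : Type*} [Fintype S] [Nonempty S] [Fintype A] [Nonempty A]
    (T1 T2 : S → A → PMF S) (π : S → A)
    (H : ℕ) (hH : 1 ≤ H) (s0 : S)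
    (δT : ℝ) (hδT : 0 ≤ δT)
    (htrans : ∀ s : S, ∀ a : A,
      (∑ s' : S, |((T1 s a) s').toReal - ((T2 s a) s').toReal|) ≤ δT) :
    (∑ τ : Fin H → S, |trajProb T1 π s0 H τ - trajProb T2 π s0 H τ|) ≤ δT * H :=
  traj_bound_aux T1 T2 π δT hδT htrans H s0
end
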